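/- Let N ≥ 1, z₀ ≥ 0, and let H : [0,∞) → ℝ be continuously differentiable with 0 ≤ H(z) for all z and H′(z) ≥ 0 for all z ≥ z₀. Then there exists a constant c > 0 such that for all s ≥ 0 and all v, U ∈ ℝ^N: s (v − U) · ( (1 − H(|v|²)) v − (1 − H(|U|²)) U ) ≤ c · s |v − U|². -/

import Mathlib

open Set

private lemma stmt9_min_abs (r t w : ℝ) : |min r w - min t w| ≤ |r - t| := by
  rcases le_total r w with h1 | h1 <;> rcases le_total t w with h2 | h2
  · simp [min_eq_left h1, min_eq_left h2]
  · rw [min_eq_left h1, min_eq_right h2,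
      abs_of_nonpos (by linarith : r - w ≤ 0), abs_of_nonpos (by linarith : r - t ≤ 0)]
    linarith
  · rw [min_eq_right h1, min_eq_left h2,
      abs_of_nonneg (by linarith : 0 ≤ w - t), abs_of_nonneg (by linarith : 0 ≤ r - t)]
    linarith
  · rw [min_eq_right h1, min_eq_right h2]
    simpa using abs_nonneg (r - t)

set_option maxHeartbeats 1000000 in
private lemma stmt9_core {E : Type*} [NormedAddCommGroup E] [InnerProductSpace ℝ E]
    (z₀ : ℝ) (hz₀ : 0 ≤ z₀) (H : ℝ → ℝ) (K : ℝ) (hK : 0 ≤ K)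
    (hLip : ∀ x ∈ Icc 0 z₀, ∀ y ∈ Icc 0 z₀, |H x - H y| ≤ K * |x - y|)
    (hHnn : ∀ z, 0 ≤ z → 0 ≤ H z)
    (hmono : ∀ x y, z₀ ≤ x → x ≤ y → H x ≤ H y) (v U : E) :
    (inner ℝ (v - U) ((1 - H (‖v‖ ^ 2)) • v - (1 - H (‖U‖ ^ 2)) • U) : ℝ)
      ≤ (1 + 2 * K * z₀) * ‖v - U‖ ^ 2 := by
  set r := ‖v‖ with hr
  set t := ‖U‖ with ht
  set q := ‖v - U‖ with hq
  have hrnn : 0 ≤ r := norm_nonneg _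
  have htnn : 0 ≤ t := norm_nonneg _
  have hqnn : 0 ≤ q := norm_nonneg _
  set w := Real.sqrt z₀ with hwdef
  have hwnn : 0 ≤ w := Real.sqrt_nonneg _
  have hw2 : w ^ 2 = z₀ := Real.sq_sqrt hz₀
  set a := r ^ 2 with ha
  set b := t ^ 2 with hb
  have hann : 0 ≤ a := sq_nonneg _
  have hbnn : 0 ≤ b := sq_nonneg _
  set X : ℝ := inner ℝ (v - U) v with hX
  set Y : ℝ := inner ℝ (v - U) U with hY
  set A1 := H (min a z₀) with hA1
  set B1 := H (min b z₀) with hB1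
  set A2 := H (max a z₀) - H z₀ with hA2
  set B2 := H (max b z₀) - H z₀ with hB2
  clear_value r t q w a b X Y A1 B1 A2 B2
  have hXY : X - Y = q ^ 2 := by
    rw [hX, hY, hq, ← inner_sub_right, real_inner_self_eq_norm_sq]
  have hXpY : X + Y = a - b := by
    rw [hX, hY, ha, hb, hr, ht]
    simp only [inner_sub_left]
    rw [real_inner_self_eq_norm_sq, real_inner_self_eq_norm_sq, real_inner_comm]
    ring
  have hXle : |X| ≤ q * r := by
    rw [hX, hq, hr]; exact abs_real_inner_le_norm _ _
  have hYle : |Y| ≤ q * t := by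
    rw [hY, hq, ht]; exact abs_real_inner_le_norm _ _
  have hrt : |r - t| ≤ q := by
    rw [hr, ht, hq]; exact abs_norm_sub_norm_le v U
  have hsplitA : H a = A1 + A2 := by
    rcases le_total a z₀ with h | h
    · rw [hA1, hA2, min_eq_left h, max_eq_right h]; ring
    · rw [hA1, hA2, min_eq_right h, max_eq_left h]; ring
  have hsplitB : H b = B1 + B2 := by
    rcases le_total b z₀ with h | h
    · rw [hB1, hB2, min_eq_left h, max_eq_right h]; ring
    · rw [hB1, hB2, min_eq_right h, max_eq_left h]; ring
  -- expand the inner product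
  have hE : (inner ℝ (v - U) ((1 - H a) • v - (1 - H b) • U) : ℝ)
      = (1 - H a) * X - (1 - H b) * Y := by
    rw [hX, hY, inner_sub_right, real_inner_smul_right, real_inner_smul_right]
  -- H₂ contribution is nonnegative
  have hA2nn : 0 ≤ A2 := by
    rw [hA2]; exact sub_nonneg.2 (hmono z₀ _ le_rfl (le_max_right _ _))
  have hB2nn : 0 ≤ B2 := by
    rw [hB2]; exact sub_nonneg.2 (hmono z₀ _ le_rfl (le_max_right _ _))
  have hprod : 0 ≤ (A2 - B2) * (a - b) := by
    rcases le_total a b with h | h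
    · have h2 : A2 ≤ B2 := by
        rw [hA2, hB2]
        have := hmono (max a z₀) (max b z₀) (le_max_right _ _) (max_le_max h le_rfl)
        linarith
      have h3 := mul_nonneg (by linarith : (0:ℝ) ≤ B2 - A2) (by linarith : (0:ℝ) ≤ b - a)
      nlinarith [h3]
    · have h2 : B2 ≤ A2 := by
        rw [hA2, hB2]
        have := hmono (max b z₀) (max a z₀) (le_max_right _ _) (max_le_max h le_rfl)
        linarith
      exact mul_nonneg (by linarith) (by linarith)
  have hT2 : 0 ≤ A2 * X - B2 * Y := by
    have heq2 : A2 * X - B2 * Y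
        = (A2 + B2) * q ^ 2 / 2 + (A2 - B2) * (a - b) / 2 := by
      linear_combination ((A2 + B2) / 2) * hXY + ((A2 - B2) / 2) * hXpY
    have hp1 : 0 ≤ (A2 + B2) * q ^ 2 := mul_nonneg (by linarith) (sq_nonneg q)
    rw [heq2]
    have e1 : 0 ≤ (A2 + B2) * q ^ 2 / 2 := by linarith
    have e2 : 0 ≤ (A2 - B2) * (a - b) / 2 := by linarith
    linarith
  -- H₁ contribution bounded below
  have hA1nn : 0 ≤ A1 := by rw [hA1]; exact hHnn _ (le_min hann hz₀)
  have hB1nn : 0 ≤ B1 := by rw [hB1]; exact hHnn _ (le_min hbnn hz₀)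
  have hminsq : ∀ x : ℝ, 0 ≤ x → min (x ^ 2) z₀ = (min x w) ^ 2 := by
    intro x hx
    rcases le_total x w with h | h
    · rw [min_eq_left h, min_eq_left (by nlinarith)]
    · rw [min_eq_right h, min_eq_right (by nlinarith), hw2]
  have habsd : |A1 - B1| ≤ 2 * K * w * |r - t| := by
    have h1 : |A1 - B1| ≤ K * |min a z₀ - min b z₀| := by
      rw [hA1, hB1]
      exact hLip _ ⟨le_min hann hz₀, min_le_right _ _⟩ _ ⟨le_min hbnn hz₀, min_le_right _ _⟩
    have h2 : |min a z₀ - min b z₀| ≤ 2 * w * |r - t| := by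
      rw [ha, hb, hminsq r hrnn, hminsq t htnn]
      have hfac : (min r w) ^ 2 - (min t w) ^ 2
          = (min r w + min t w) * (min r w - min t w) := by ring
      rw [hfac, abs_mul]
      have hsum : |min r w + min t w| ≤ 2 * w := by
        rw [abs_of_nonneg (by positivity)]
        have := min_le_right r w; have := min_le_right t w; linarith
      have hdiff : |min r w - min t w| ≤ |r - t| := stmt9_min_abs r t w
      calc |min r w + min t w| * |min r w - min t w|
          ≤ (2 * w) * |r - t| :=
            mul_le_mul hsum hdiff (abs_nonneg _) (by positivity)
        _ = 2 * w * |r - t| := by ring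
    calc |A1 - B1| ≤ K * (2 * w * |r - t|) :=
          h1.trans (mul_le_mul_of_nonneg_left h2 hK)
      _ = 2 * K * w * |r - t| := by ring
  have hT1 : -(2 * K * z₀) * q ^ 2 ≤ A1 * X - B1 * Y := by
    have key : ∀ Z s : ℝ, |Z| ≤ q * s → 0 ≤ s → s ≤ w →
        -(2 * K * z₀) * q ^ 2 ≤ (A1 - B1) * Z := by
      intro Z s hZ hs hsw
      have h1 : |(A1 - B1) * Z| ≤ (2 * K * w * |r - t|) * (q * s) := by
        rw [abs_mul]
        exact mul_le_mul habsd hZ (abs_nonneg _) (by positivity)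
      have h2 : (2 * K * w * |r - t|) * (q * s) ≤ 2 * K * z₀ * q ^ 2 := by
        have e1 : 2 * K * w * |r - t| ≤ 2 * K * w * q :=
          mul_le_mul_of_nonneg_left hrt (by positivity)
        have e2 : q * s ≤ q * w := mul_le_mul_of_nonneg_left hsw hqnn
        calc (2 * K * w * |r - t|) * (q * s)
            ≤ (2 * K * w * q) * (q * w) :=
              mul_le_mul e1 e2 (mul_nonneg hqnn hs) (by positivity)
          _ = 2 * K * w ^ 2 * q ^ 2 := by ring
          _ = 2 * K * z₀ * q ^ 2 := by rw [hw2]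
      have := neg_abs_le ((A1 - B1) * Z)
      linarith
    rcases le_or_gt z₀ b with hbz | hbz
    · rcases le_or_gt z₀ a with haz | haz
      · -- both large: A1 = B1
        have heq : A1 = B1 := by rw [hA1, hB1, min_eq_right haz, min_eq_right hbz]
        have he : A1 * X - B1 * Y = A1 * q ^ 2 := by
          rw [heq]; linear_combination B1 * hXY
        have h1 : 0 ≤ A1 * q ^ 2 := mul_nonneg hA1nn (sq_nonneg _)
        have h2 : 0 ≤ 2 * K * z₀ * q ^ 2 := by positivity
        linarith
      · -- a < z₀ : pair difference with X, r ≤ w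
        have hrw : r ≤ w := by nlinarith [haz, hw2, hrnn, hwnn]
        have hdec : A1 * X - B1 * Y = B1 * q ^ 2 + (A1 - B1) * X := by
          linear_combination B1 * hXY
        have := key X r hXle hrnn hrw
        have hB1q : 0 ≤ B1 * q ^ 2 := mul_nonneg hB1nn (sq_nonneg _)
        linarith
    · -- b < z₀ : pair difference with Y, t ≤ w
      have htw : t ≤ w := by nlinarith [hbz, hw2, htnn, hwnn]
      have hdec : A1 * X - B1 * Y = A1 * q ^ 2 + (A1 - B1) * Y := by
        linear_combination A1 * hXY
      have := key Y t hYle htnn htw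
      have hA1q : 0 ≤ A1 * q ^ 2 := mul_nonneg hA1nn (sq_nonneg _)
      linarith
  -- combine
  rw [hE, hsplitA, hsplitB]
  have : (1 - (A1 + A2)) * X - (1 - (B1 + B2)) * Y
      = (X - Y) - (A1 * X - B1 * Y) - (A2 * X - B2 * Y) := by ring
  rw [this, hXY]
  linarith [hT1, hT2]

/-- If `H : [0,∞) → ℝ` is C¹, nonnegative, with `H′(z) ≥ 0` for `z ≥ z₀`, then
there is `c > 0` such that for all `s ≥ 0` and `v, U ∈ ℝ^N`,
`s (v−U)·((1−H(|v|²))v − (1−H(|U|²))U) ≤ c s |v−U|²`. -/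
theorem stmt9 (N : ℕ) (hN : 1 ≤ N) (z₀ : ℝ) (hz₀ : 0 ≤ z₀) (H : ℝ → ℝ)
    (hH : ContDiffOn ℝ 1 H (Set.Ici 0))
    (hHnn : ∀ z, 0 ≤ z → 0 ≤ H z)
    (hH' : ∀ z, z₀ ≤ z → 0 ≤ derivWithin H (Set.Ici 0) z) :
    ∃ c : ℝ, 0 < c ∧ ∀ s : ℝ, 0 ≤ s → ∀ v U : EuclideanSpace ℝ (Fin N),
      s * (inner ℝ (v - U) ((1 - H (‖v‖ ^ 2)) • v - (1 - H (‖U‖ ^ 2)) • U) : ℝ)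
        ≤ c * (s * ‖v - U‖ ^ 2) := by
  -- Lipschitz constant on `Icc 0 (z₀+1)`
  have hsub : Icc (0 : ℝ) (z₀ + 1) ⊆ Ici 0 := fun x hx => hx.1
  have hHS : ContDiffOn ℝ 1 H (Icc 0 (z₀ + 1)) := hH.mono hsub
  have hud : UniqueDiffOn ℝ (Icc (0 : ℝ) (z₀ + 1)) := uniqueDiffOn_Icc (by linarith)
  have hdc : ContinuousOn (derivWithin H (Icc 0 (z₀ + 1))) (Icc 0 (z₀ + 1)) :=
    hHS.continuousOn_derivWithin hud le_rfl
  obtain ⟨K0, hK0⟩ := isCompact_Icc.exists_bound_of_continuousOn hdc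
  set K := max K0 0 with hKdef
  have hKnn : 0 ≤ K := le_max_right _ _
  have hLip : ∀ x ∈ Icc (0:ℝ) z₀, ∀ y ∈ Icc (0:ℝ) z₀, |H x - H y| ≤ K * |x - y| := by
    intro x hx y hy
    have hx' : x ∈ Icc (0:ℝ) (z₀ + 1) := ⟨hx.1, by linarith [hx.2]⟩
    have hy' : y ∈ Icc (0:ℝ) (z₀ + 1) := ⟨hy.1, by linarith [hy.2]⟩
    have hbd : ∀ z ∈ Icc (0:ℝ) (z₀ + 1), ‖derivWithin H (Icc 0 (z₀ + 1)) z‖ ≤ K :=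
      fun z hz => (hK0 z hz).trans (le_max_left K0 0)
    have := Convex.norm_image_sub_le_of_norm_derivWithin_le (hHS.differentiableOn one_ne_zero)
      hbd (convex_Icc _ _) hy' hx'
    simpa [Real.norm_eq_abs] using this
  -- monotonicity of H on `Ici z₀`
  have hmono : ∀ x y, z₀ ≤ x → x ≤ y → H x ≤ H y := by
    have hmo : MonotoneOn H (Ici z₀) := by
      apply monotoneOn_of_deriv_nonneg (convex_Ici z₀)
        (hH.continuousOn.mono (Ici_subset_Ici.2 hz₀))
      · intro x hx
        rw [interior_Ici] at hx
        have hx0 : (0 : ℝ) < x := lt_of_le_of_lt hz₀ hx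
        have hnb : Ici (0 : ℝ) ∈ nhds x := Ici_mem_nhds hx0
        exact (((hH.differentiableOn one_ne_zero) x (le_of_lt hx0)).differentiableAt
          hnb).differentiableWithinAt
      · intro x hx
        rw [interior_Ici] at hx
        have hx0 : (0 : ℝ) < x := lt_of_le_of_lt hz₀ hx
        have hnb : Ici (0 : ℝ) ∈ nhds x := Ici_mem_nhds hx0
        rw [← derivWithin_of_mem_nhds hnb]
        exact hH' x (le_of_lt hx)
    intro x y hx hxy
    exact hmo hx (le_trans hx hxy) hxy
  refine ⟨1 + 2 * K * z₀, by positivity, fun s hs v U => ?_⟩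
  have core := stmt9_core z₀ hz₀ H K hKnn hLip hHnn hmono v U
  calc s * (inner ℝ (v - U) ((1 - H (‖v‖ ^ 2)) • v - (1 - H (‖U‖ ^ 2)) • U) : ℝ)
      ≤ s * ((1 + 2 * K * z₀) * ‖v - U‖ ^ 2) := mul_le_mul_of_nonneg_left core hs
    _ = (1 + 2 * K * z₀) * (s * ‖v - U‖ ^ 2) := by ring
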